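/- arXiv:1107.5326 — 2 statements merged into one kernel-verified Lean document; each statement's English description precedes it below -/
import Mathlib

section
/- Let h > 0, k > 0, K_m > 0 and K_cm ∈ ℝ with |K_cm| < K_m. Define ξ(z) = (2z + h)/(2h) and K(z) = K_m + K_cm · ξ(z)^k for z ∈ [-h/2, h/2]. Then for every z ∈ [-h/2, h/2], ∫_{-h/2}^{z} 1/K(s) ds = (h/K_m) · Σ_{n=0}^{∞} (-K_cm/K_m)^n · ξ(z)^{n k + 1} / (n k + 1). -/
open MeasureTheory

lemma conductivity_aux (k Km Kcm : ℝ)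
    (hk : 0 < k) (hKm : 0 < Km) (hKcm : |Kcm| < Km)
    (x : ℝ) (hx0 : 0 ≤ x) (hx1 : x ≤ 1) :
    (∫ t in (0:ℝ)..x, 1 / (Km + Kcm * t ^ k)) =
      (1 / Km) * ∑' n : ℕ, (-Kcm / Km) ^ n * x ^ ((n : ℝ) * k + 1) / ((n : ℝ) * k + 1) := by
  set r : ℝ := -Kcm / Km with hr
  have hrabs : |r| < 1 := by
    rw [hr, abs_div, abs_neg, abs_of_pos hKm, div_lt_one hKm]; exact hKcm
  have hexp : ∀ n : ℕ, (0:ℝ) ≤ (n:ℝ) * k := fun n => mul_nonneg n.cast_nonneg hk.le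
  have hexp1 : ∀ n : ℕ, (0:ℝ) < (n:ℝ) * k + 1 := fun n => by linarith [hexp n]
  set F : ℕ → ℝ → ℝ := fun n t => (1 / Km) * r ^ n * t ^ ((n : ℝ) * k) with hF
  -- interval integrability of each term
  have hII : ∀ n : ℕ, IntervalIntegrable (F n) volume 0 x := fun n => by
    exact (intervalIntegral.intervalIntegrable_rpow' (by linarith [hexp n])).const_mul _
  have hInt : ∀ n : ℕ, IntegrableOn (F n) (Set.Ioc 0 x) volume := fun n =>
    (intervalIntegrable_iff_integrableOn_Ioc_of_le hx0).mp (hII n)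
  -- value of each term's integral
  have hval : ∀ n : ℕ, (∫ t in (0:ℝ)..x, F n t)
      = (1 / Km) * r ^ n * (x ^ ((n:ℝ) * k + 1) / ((n:ℝ) * k + 1)) := fun n => by
    rw [hF]
    rw [intervalIntegral.integral_const_mul,
      integral_rpow (Or.inl (by linarith [hexp n]))]
    rw [Real.zero_rpow (by positivity)]
    ring
  -- summability of the integrals of norms
  have hnorm : ∀ n : ℕ, (∫ t in Set.Ioc 0 x, ‖F n t‖)
      ≤ (1 / Km) * |r| ^ n := fun n => by
    have h1 : ∀ t ∈ Set.Ioc (0:ℝ) x, ‖F n t‖ ≤ (1 / Km) * |r| ^ n := by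
      intro t ht
      have ht0 : 0 < t := ht.1
      have ht1 : t ≤ 1 := ht.2.trans hx1
      have htp : t ^ ((n:ℝ) * k) ≤ 1 := Real.rpow_le_one ht0.le ht1 (hexp n)
      have htp0 : 0 ≤ t ^ ((n:ℝ) * k) := Real.rpow_nonneg ht0.le _
      rw [hF]
      simp only [Real.norm_eq_abs, abs_mul, abs_pow]
      rw [abs_of_pos (by positivity : (0:ℝ) < 1 / Km), abs_of_nonneg htp0]
      have : (0:ℝ) ≤ (1 / Km) * |r| ^ n := by positivity
      nlinarith [pow_nonneg (abs_nonneg r) n]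
    calc (∫ t in Set.Ioc 0 x, ‖F n t‖)
        ≤ ∫ _t in Set.Ioc 0 x, (1 / Km) * |r| ^ n := by
          apply setIntegral_mono_on (hInt n).norm (integrableOn_const measure_Ioc_lt_top.ne)
            measurableSet_Ioc h1
      _ = (volume (Set.Ioc 0 x)).toReal * ((1 / Km) * |r| ^ n) := by
          rw [setIntegral_const]; rfl
      _ ≤ 1 * ((1 / Km) * |r| ^ n) := by
          apply mul_le_mul_of_nonneg_right _ (by positivity)
          rw [Real.volume_Ioc]
          rw [ENNReal.toReal_ofReal (by linarith)]
          linarith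
      _ = (1 / Km) * |r| ^ n := one_mul _
  have hSumNorm : Summable fun n : ℕ => ∫ t in Set.Ioc 0 x, ‖F n t‖ := by
    apply Summable.of_nonneg_of_le
      (fun n => integral_nonneg fun t => norm_nonneg _) hnorm
    exact (summable_geometric_of_lt_one (abs_nonneg r) hrabs).mul_left _
  have hswap := MeasureTheory.integral_tsum_of_summable_integral_norm hInt hSumNorm
  -- pointwise sum identity on Ioc
  have hpt : ∀ t ∈ Set.Ioc (0:ℝ) x, (∑' n : ℕ, F n t) = 1 / (Km + Kcm * t ^ k) := by
    intro t ht
    have ht0 : 0 < t := ht.1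
    have ht1 : t ≤ 1 := ht.2.trans hx1
    have htk1 : t ^ k ≤ 1 := Real.rpow_le_one ht0.le ht1 hk.le
    have htk0 : 0 ≤ t ^ k := Real.rpow_nonneg ht0.le _
    have hq : ‖r * t ^ k‖ < 1 := by
      rw [Real.norm_eq_abs, abs_mul, abs_of_nonneg htk0]
      nlinarith [abs_nonneg r]
    have hterm : ∀ n : ℕ, F n t = (1 / Km) * (r * t ^ k) ^ n := by
      intro n
      have he : t ^ ((n:ℝ) * k) = (t ^ k) ^ n := by
        rw [mul_comm (n:ℝ) k, Real.rpow_mul ht0.le, Real.rpow_natCast]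
      simp only [hF]
      rw [he, mul_pow]
      ring
    rw [tsum_congr hterm, tsum_mul_left, tsum_geometric_of_norm_lt_one hq]
    have hD : 0 < Km + Kcm * t ^ k := by
      have : |Kcm * t ^ k| ≤ |Kcm| := by
        rw [abs_mul, abs_of_nonneg htk0]
        nlinarith [abs_nonneg Kcm]
      have := abs_le.mp this
      linarith [this.1]
    have h1r : 1 - r * t ^ k = (Km + Kcm * t ^ k) / Km := by
      rw [hr]; field_simp; ring
    rw [h1r]
    field_simp
  calc (∫ t in (0:ℝ)..x, 1 / (Km + Kcm * t ^ k))
      = ∫ t in Set.Ioc 0 x, 1 / (Km + Kcm * t ^ k) := intervalIntegral.integral_of_le hx0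
    _ = ∫ t in Set.Ioc 0 x, (∑' n : ℕ, F n t) :=
        (setIntegral_congr_fun measurableSet_Ioc fun t ht => (hpt t ht).symm)
    _ = ∑' n : ℕ, ∫ t in Set.Ioc 0 x, F n t := hswap.symm
    _ = ∑' n : ℕ, ∫ t in (0:ℝ)..x, F n t := by
        refine tsum_congr fun n => ?_
        rw [intervalIntegral.integral_of_le hx0]
    _ = (1 / Km) * ∑' n : ℕ, r ^ n * x ^ ((n : ℝ) * k + 1) / ((n : ℝ) * k + 1) := by
        rw [tsum_congr hval, ← tsum_mul_left]
        exact tsum_congr fun n => by ring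

/- STATEMENT 4: With ξ(z) = (2z+h)/(2h) and K(z) = K_m + K_cm·ξ(z)^k, |K_cm| < K_m,
   for every z ∈ [-h/2, h/2]:
   ∫_{-h/2}^{z} 1/K(s) ds = (h/K_m) · Σ_{n=0}^∞ (-K_cm/K_m)^n · ξ(z)^{nk+1}/(nk+1). -/
theorem conductivity_integral_series (h k Km Kcm : ℝ)
    (hh : 0 < h) (hk : 0 < k) (hKm : 0 < Km) (hKcm : |Kcm| < Km)
    (ξ : ℝ → ℝ) (hξ : ∀ z, ξ z = (2 * z + h) / (2 * h))
    (K : ℝ → ℝ) (hK : ∀ z, K z = Km + Kcm * ξ z ^ k) :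
    ∀ z ∈ Set.Icc (-(h / 2)) (h / 2),
      (∫ s in (-(h / 2))..z, 1 / K s) =
        (h / Km) * ∑' n : ℕ,
          (-Kcm / Km) ^ n * ξ z ^ ((n : ℝ) * k + 1) / ((n : ℝ) * k + 1) := by
  intro z hz
  obtain ⟨hz1, hz2⟩ := hz
  have hx0 : 0 ≤ ξ z := by
    rw [hξ]; apply div_nonneg (by linarith) (by linarith)
  have hx1 : ξ z ≤ 1 := by
    rw [hξ, div_le_one (by linarith)]; linarith
  have hcomp : ∀ s : ℝ, 1 / K s = (fun t => 1 / (Km + Kcm * t ^ k)) ((1 / h) * s + 1 / 2) := by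
    intro s
    have : ξ s = (1 / h) * s + 1 / 2 := by rw [hξ]; field_simp
    rw [hK, this]
  have hstep : (∫ s in (-(h / 2))..z, 1 / K s)
      = h * ∫ t in (0:ℝ)..(ξ z), 1 / (Km + Kcm * t ^ k) := by
    simp_rw [hcomp]
    rw [intervalIntegral.integral_comp_mul_add (fun t => 1 / (Km + Kcm * t ^ k))
      (one_div_ne_zero hh.ne') (1 / 2)]
    have e1 : (1 / h) * (-(h / 2)) + 1 / 2 = 0 := by field_simp; ring
    have e2 : (1 / h) * z + 1 / 2 = ξ z := by rw [hξ]; field_simp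
    rw [e1, e2, smul_eq_mul, one_div, inv_inv]
  rw [hstep, conductivity_aux k Km Kcm hk hKm hKcm (ξ z) hx0 hx1]
  rw [← mul_assoc]
  congr 1
  field_simp
end

section
/- Let h > 0, k > 0, K_m > 0 and K_cm ∈ ℝ with |K_cm| < K_m, and let T_m, T_c ∈ ℝ. With ξ(z) = (2z+h)/(2h) and K(z) = K_m + K_cm · ξ(z)^k, define S(x) = Σ_{n=0}^{∞} (-K_cm/K_m)^n · x^{n k + 1} / (n k + 1) for x ∈ [0, 1]. Then S(1) > 0 and the function T(z) = T_m + (T_c - T_m) · S(ξ(z)) / S(1) is the solution of the steady heat conduction boundary value problem: T is continuously differentiable, K(z)·T'(z) is constant in z, and T(-h/2) = T_m, T(h/2) = T_c. -/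
/- STATEMENT 5: With ξ(z) = (2z+h)/(2h), K(z) = K_m + K_cm·ξ(z)^k (|K_cm| < K_m) and
   S(x) = Σ_{n=0}^∞ (-K_cm/K_m)^n · x^{nk+1}/(nk+1), one has S(1) > 0 and
   T(z) = T_m + (T_c - T_m)·S(ξ(z))/S(1) solves the steady heat conduction BVP:
   T is C¹, K·T' is constant on [-h/2, h/2], and T(-h/2) = T_m, T(h/2) = T_c. -/
theorem powerlaw_temperature_series_solution (h k Km Kcm Tm Tc : ℝ)
    (hh : 0 < h) (hk : 0 < k) (hKm : 0 < Km) (hKcm : |Kcm| < Km)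
    (ξ : ℝ → ℝ) (hξ : ∀ z, ξ z = (2 * z + h) / (2 * h))
    (K : ℝ → ℝ) (hK : ∀ z, K z = Km + Kcm * ξ z ^ k)
    (S : ℝ → ℝ)
    (hS : ∀ x, S x = ∑' n : ℕ,
      (-Kcm / Km) ^ n * x ^ ((n : ℝ) * k + 1) / ((n : ℝ) * k + 1))
    (T : ℝ → ℝ)
    (hT : ∀ z, T z = Tm + (Tc - Tm) * S (ξ z) / S 1) :
    0 < S 1 ∧
    (∃ T' : ℝ → ℝ,
      ContinuousOn T' (Set.Icc (-(h / 2)) (h / 2)) ∧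
      (∀ z ∈ Set.Icc (-(h / 2)) (h / 2),
        HasDerivWithinAt T (T' z) (Set.Icc (-(h / 2)) (h / 2)) z) ∧
      (∃ c : ℝ, ∀ z ∈ Set.Icc (-(h / 2)) (h / 2), K z * T' z = c)) ∧
    T (-(h / 2)) = Tm ∧ T (h / 2) = Tc := by
  set q : ℝ := -Kcm / Km with hqdef
  have hKm' : Km ≠ 0 := hKm.ne'
  have hq : |q| < 1 := by
    rw [hqdef, abs_div, abs_neg, abs_of_pos hKm, div_lt_one hKm]; exact hKcm
  -- choose r > 1 with |q| * r ^ k < 1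
  obtain ⟨r, hrq, hr1⟩ : ∃ r : ℝ, (|q| * r ^ k < 1) ∧ 1 < r := by
    have hc : ContinuousAt (fun t : ℝ => |q| * t ^ k) 1 :=
      continuousAt_const.mul (Real.continuous_rpow_const hk.le).continuousAt
    have h1 : |q| * (1 : ℝ) ^ k < 1 := by rw [Real.one_rpow, mul_one]; exact hq
    have h2 : ∀ᶠ t in nhds (1 : ℝ), |q| * t ^ k < 1 :=
      Filter.Tendsto.eventually_lt_const h1 hc
    haveI : (nhdsWithin (1 : ℝ) (Set.Ioi 1)).NeBot := nhdsGT_neBot 1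
    have h3 : ∀ᶠ t in nhdsWithin (1 : ℝ) (Set.Ioi 1), |q| * t ^ k < 1 ∧ 1 < t :=
      (h2.filter_mono nhdsWithin_le_nhds).and eventually_mem_nhdsWithin
    exact h3.exists
  have hr0 : (0 : ℝ) ≤ r := le_of_lt (lt_trans one_pos hr1)
  have hrk0 : (0 : ℝ) ≤ r ^ k := Real.rpow_nonneg hr0 k
  set s : Set ℝ := Set.Ioo (-r) r with hsdef
  have hs_open : IsOpen s := isOpen_Ioo
  have hs_conn : IsPreconnected s := (convex_Ioo _ _).isPreconnected
  have hsub : Set.Icc (0 : ℝ) 1 ⊆ s := by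
    intro x hx
    exact ⟨by nlinarith [hx.1], lt_of_le_of_lt hx.2 hr1⟩
  have hp : ∀ n : ℕ, (0 : ℝ) < (n : ℝ) * k + 1 := by
    intro n; positivity
  -- derivatives of the terms
  have hderiv : ∀ (n : ℕ) (x : ℝ),
      HasDerivAt (fun y : ℝ => q ^ n * y ^ ((n : ℝ) * k + 1) / ((n : ℝ) * k + 1))
        (q ^ n * x ^ ((n : ℝ) * k)) x := by
    intro n x
    have h1 : (1 : ℝ) ≤ (n : ℝ) * k + 1 := by
      have : (0 : ℝ) ≤ (n : ℝ) * k := by positivity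
      linarith
    have hd := (Real.hasDerivAt_rpow_const (x := x) (p := (n : ℝ) * k + 1)
      (Or.inr h1)).const_mul (q ^ n / ((n : ℝ) * k + 1))
    have he : (n : ℝ) * k + 1 - 1 = (n : ℝ) * k := by ring
    rw [he] at hd
    have hne : (n : ℝ) * k + 1 ≠ 0 := (hp n).ne'
    have hfeq : (fun y : ℝ => q ^ n * y ^ ((n : ℝ) * k + 1) / ((n : ℝ) * k + 1)) =
        (fun y : ℝ => q ^ n / ((n : ℝ) * k + 1) * y ^ ((n : ℝ) * k + 1)) := by
      funext y; field_simp
    have hveq : q ^ n * x ^ ((n : ℝ) * k) =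
        q ^ n / ((n : ℝ) * k + 1) * (((n : ℝ) * k + 1) * x ^ ((n : ℝ) * k)) := by
      field_simp
    rw [hfeq, hveq]; exact hd
  -- bound on s
  have hbound : ∀ (n : ℕ) (x : ℝ), x ∈ s →
      ‖q ^ n * x ^ ((n : ℝ) * k)‖ ≤ (|q| * r ^ k) ^ n := by
    intro n x hx
    have hxr : |x| ≤ r := by
      rw [abs_le]; exact ⟨hx.1.le, hx.2.le⟩
    have h1 : |x ^ ((n : ℝ) * k)| ≤ |x| ^ ((n : ℝ) * k) :=
      Real.abs_rpow_le_abs_rpow _ _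
    have h2 : |x| ^ ((n : ℝ) * k) ≤ r ^ ((n : ℝ) * k) :=
      Real.rpow_le_rpow (abs_nonneg x) hxr (by positivity)
    have h3 : r ^ ((n : ℝ) * k) = (r ^ k) ^ n := by
      rw [mul_comm, Real.rpow_mul hr0, Real.rpow_natCast]
    calc ‖q ^ n * x ^ ((n : ℝ) * k)‖ = |q| ^ n * |x ^ ((n : ℝ) * k)| := by
          rw [Real.norm_eq_abs, abs_mul, abs_pow]
      _ ≤ |q| ^ n * (r ^ k) ^ n := by
          refine mul_le_mul_of_nonneg_left ?_ (by positivity)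
          rw [← h3]; exact le_trans h1 h2
      _ = (|q| * r ^ k) ^ n := (mul_pow _ _ _).symm
  have hu : Summable fun n : ℕ => (|q| * r ^ k) ^ n :=
    summable_geometric_of_lt_one (by positivity) hrq
  have hg0 : ∀ n : ℕ,
      q ^ n * (0 : ℝ) ^ ((n : ℝ) * k + 1) / ((n : ℝ) * k + 1) = 0 := by
    intro n; rw [Real.zero_rpow (hp n).ne']; ring
  have h0mem : (0 : ℝ) ∈ s := hsub ⟨le_refl 0, zero_le_one⟩
  have h1mem01 : (1 : ℝ) ∈ Set.Icc (0 : ℝ) 1 := ⟨zero_le_one, le_refl 1⟩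
  have h0mem01 : (0 : ℝ) ∈ Set.Icc (0 : ℝ) 1 := ⟨le_refl 0, zero_le_one⟩
  have hSfun : S = fun x : ℝ => ∑' n : ℕ,
      q ^ n * x ^ ((n : ℝ) * k + 1) / ((n : ℝ) * k + 1) := funext hS
  -- derivative of S on s
  have hSderiv : ∀ x ∈ s, HasDerivAt S (∑' n : ℕ, q ^ n * x ^ ((n : ℝ) * k)) x := by
    intro x hx
    rw [hSfun]
    exact hasDerivAt_tsum_of_isPreconnected hu hs_open hs_conn
      (fun n y _ => hderiv n y) hbound h0mem
      (by simp only [hg0]; exact summable_zero) hx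
  -- closed form of the derivative series on [0,1]
  have hf_eq : ∀ x ∈ Set.Icc (0 : ℝ) 1,
      (∑' n : ℕ, q ^ n * x ^ ((n : ℝ) * k)) = (1 - q * x ^ k)⁻¹ := by
    intro x hx
    have hterm : ∀ n : ℕ, q ^ n * x ^ ((n : ℝ) * k) = (q * x ^ k) ^ n := by
      intro n
      rw [mul_pow, mul_comm (n : ℝ) k, Real.rpow_mul hx.1, Real.rpow_natCast]
    rw [tsum_congr hterm]
    refine tsum_geometric_of_norm_lt_one ?_
    have hxk1 : x ^ k ≤ 1 := Real.rpow_le_one hx.1 hx.2 hk.le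
    have hxk0 : 0 ≤ x ^ k := Real.rpow_nonneg hx.1 k
    rw [Real.norm_eq_abs, abs_mul, abs_of_nonneg hxk0]
    calc |q| * x ^ k ≤ |q| * 1 := by
          exact mul_le_mul_of_nonneg_left hxk1 (abs_nonneg q)
      _ < 1 := by rw [mul_one]; exact hq
  have hden_pos : ∀ x ∈ Set.Icc (0 : ℝ) 1, 0 < 1 - q * x ^ k := by
    intro x hx
    have hxk1 : x ^ k ≤ 1 := Real.rpow_le_one hx.1 hx.2 hk.le
    have hxk0 : 0 ≤ x ^ k := Real.rpow_nonneg hx.1 k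
    have : |q * x ^ k| < 1 := by
      rw [abs_mul, abs_of_nonneg hxk0]
      calc |q| * x ^ k ≤ |q| * 1 := mul_le_mul_of_nonneg_left hxk1 (abs_nonneg q)
        _ < 1 := by rw [mul_one]; exact hq
    have := (abs_lt.1 this).2
    linarith
  -- S is strictly monotone on [0,1]
  have hSmono : StrictMonoOn S (Set.Icc (0 : ℝ) 1) := by
    apply strictMonoOn_of_deriv_pos (convex_Icc 0 1)
    · intro x hx
      exact ((hSderiv x (hsub hx)).continuousAt).continuousWithinAt
    · intro x hx
      rw [interior_Icc] at hx
      have hx' : x ∈ Set.Icc (0 : ℝ) 1 := Set.Ioo_subset_Icc_self hx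
      rw [(hSderiv x (hsub hx')).deriv, hf_eq x hx']
      exact inv_pos.2 (hden_pos x hx')
  have hS0 : S 0 = 0 := by
    rw [hS]
    simp only [hg0]
    exact tsum_zero
  have hS1 : 0 < S 1 := by
    have := hSmono h0mem01 h1mem01 zero_lt_one
    rwa [hS0] at this
  have hS1' : S 1 ≠ 0 := hS1.ne'
  -- ξ facts
  have hξd : ∀ z : ℝ, HasDerivAt ξ (1 / h) z := by
    intro z
    have hxf : ξ = fun z : ℝ => (2 * z + h) / (2 * h) := funext hξ
    rw [hxf]
    have hd := (((hasDerivAt_id z).const_mul 2).add_const h).div_const (2 * h)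
    exact hd.congr_deriv (by field_simp)
  have hξmem : ∀ z ∈ Set.Icc (-(h / 2)) (h / 2), ξ z ∈ Set.Icc (0 : ℝ) 1 := by
    intro z hz
    rw [hξ]
    constructor
    · apply div_nonneg _ (by linarith)
      linarith [hz.1]
    · rw [div_le_one (by linarith)]
      linarith [hz.2]
  have hξ0 : ξ (-(h / 2)) = 0 := by rw [hξ]; field_simp; ring
  have hξ1 : ξ (h / 2) = 1 := by
    rw [hξ]
    field_simp
    ring
  -- K in terms of the denominator
  have hKden : ∀ z : ℝ, K z = Km * (1 - q * ξ z ^ k) := by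
    intro z
    rw [hK, hqdef]
    field_simp
    ring
  have hKpos : ∀ z ∈ Set.Icc (-(h / 2)) (h / 2), 0 < K z := by
    intro z hz
    rw [hKden]
    exact mul_pos hKm (hden_pos _ (hξmem z hz))
  refine ⟨hS1, ⟨fun z => (Tc - Tm) / S 1 * ((1 - q * ξ z ^ k)⁻¹ * (1 / h)), ?_, ?_, ?_⟩, ?_, ?_⟩
  · -- continuity of T'
    have hcξ : Continuous ξ := by
      have hxf : ξ = fun z : ℝ => (2 * z + h) / (2 * h) := funext hξ
      rw [hxf]; fun_prop
    have hcden : ContinuousOn (fun z => 1 - q * ξ z ^ k) (Set.Icc (-(h / 2)) (h / 2)) := by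
      apply Continuous.continuousOn
      exact continuous_const.sub (continuous_const.mul
        ((Real.continuous_rpow_const hk.le).comp hcξ))
    have hne : ∀ z ∈ Set.Icc (-(h / 2)) (h / 2), 1 - q * ξ z ^ k ≠ 0 := by
      intro z hz
      exact (hden_pos _ (hξmem z hz)).ne'
    exact continuousOn_const.mul ((hcden.inv₀ hne).mul continuousOn_const)
  · -- derivative of T
    intro z hz
    have hmem := hξmem z hz
    have hSd := hSderiv (ξ z) (hsub hmem)
    rw [hf_eq _ hmem] at hSd
    have hcomp : HasDerivAt (fun w => S (ξ w)) ((1 - q * ξ z ^ k)⁻¹ * (1 / h)) z :=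
      HasDerivAt.comp z hSd (hξd z)
    have hTd : HasDerivAt T
        ((Tc - Tm) / S 1 * ((1 - q * ξ z ^ k)⁻¹ * (1 / h))) z := by
      have hTf : T = fun w => Tm + (Tc - Tm) * S (ξ w) / S 1 := funext hT
      rw [hTf]
      have hd := ((hcomp.const_mul (Tc - Tm)).div_const (S 1)).const_add Tm
      exact hd.congr_deriv (by ring)
    exact hTd.hasDerivWithinAt
  · -- flux constant
    refine ⟨(Tc - Tm) / S 1 * (Km / h), fun z hz => ?_⟩
    have hne : 1 - q * ξ z ^ k ≠ 0 := (hden_pos _ (hξmem z hz)).ne'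
    rw [hKden]
    field_simp
  · rw [hT, hξ0, hS0]; ring
  · rw [hT, hξ1]
    field_simp
    ring
end
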